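/- Let ε > 0, C_ε = ⌈log_{1+ε}(1/ε)⌉, and let x̂ ∈ {0,1}^n be any vector with x̂_1 = 1, with costs 1 = c_1 ≥ c_2 ≥ ... ≥ c_n > 0. Then there exists a sequence τ = (τ_1,...,τ_m) of nonnegative integers with m ≤ ⌈2√C_ε⌉, τ_{k+1} ≥ τ_k + k for all k < m, and τ_m ≤ C_ε − 1, such that every index i ≥ 2 with x̂_i = 1 and c_i > (1+ε)^{-C_ε} satisfies (1+ε)^{-(τ_k+k)} < c_i ≤ (1+ε)^{-τ_k} for some k ∈ [m]. -/
import Mathlib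

/-- Triangular numbers: `covT k = 0 + 1 + ⋯ + k = k(k+1)/2`. -/
def covT : ℕ → ℕ
  | 0 => 0
  | k + 1 => covT k + (k + 1)

lemma covT_mono : Monotone covT := by
  apply monotone_nat_of_le_succ
  intro k
  simp [covT]

lemma covT_two_mul (k : ℕ) : 2 * covT k = k * (k + 1) := by
  induction k with
  | zero => simp [covT]
  | succ k ih => simp [covT]; ring_nf; ring_nf at ih; omega

/-- Locate `j` in a consecutive covT-interval. -/
lemma covT_locate (m j : ℕ) (hj : j < covT m) :
    ∃ k < m, covT k ≤ j ∧ j < covT (k + 1) := by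
  induction m with
  | zero => simp [covT] at hj
  | succ m ih =>
    by_cases h : j < covT m
    · obtain ⟨k, hk, h1, h2⟩ := ih h
      exact ⟨k, Nat.lt_succ_of_lt hk, h1, h2⟩
    · exact ⟨m, Nat.lt_succ_self m, Nat.le_of_not_lt h, hj⟩

/-- Locate a value `v` with `a^{-N} < v ≤ 1` in a geometric bucket. -/
lemma pow_locate (a : ℝ) (ha : 1 < a) (v : ℝ) (hv1 : v ≤ 1) :
    ∀ N : ℕ, a ^ (-(N : ℤ)) < v →
      ∃ j < N, a ^ (-((j : ℤ) + 1)) < v ∧ v ≤ a ^ (-(j : ℤ)) := by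
  intro N
  induction N with
  | zero => intro h; simp at h; linarith
  | succ N ih =>
    intro h
    by_cases h' : a ^ (-(N : ℤ)) < v
    · obtain ⟨j, hj, h1, h2⟩ := ih h'
      exact ⟨j, Nat.lt_succ_of_lt hj, h1, h2⟩
    · refine ⟨N, Nat.lt_succ_self N, ?_, le_of_not_gt h'⟩
      have e : (-((N + 1 : ℕ) : ℤ)) = -((N : ℤ) + 1) := by push_cast; ring
      rw [e] at h
      exact h

/-- Covering lemma: for any 0/1 vector `x̂` with `x̂_1 = 1` and sorted costs
`1 = c_1 ≥ c_2 ≥ … ≥ c_n > 0`, there is a sequence `τ` of length at most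
`⌈2√C_ε⌉` with `τ_{k+1} ≥ τ_k + k` and `τ_m ≤ C_ε - 1` whose buckets
`((1+ε)^{-(τ_k+k)}, (1+ε)^{-τ_k}]` cover all selected items of cost above
`(1+ε)^{-C_ε}`. Items are indexed by `Fin (n+1)` with `0` playing the role
of item `1`; `τ` is a 0-indexed list, so `τ.getD (k-1) 0` is `τ_k`. -/
theorem covering_lemma (n : ℕ) (ε : ℝ) (hε : 0 < ε)
    (c : Fin (n + 1) → ℝ) (hcpos : ∀ i, 0 < c i) (hc1 : c 0 = 1)
    (hcsorted : ∀ i j : Fin (n + 1), i ≤ j → c j ≤ c i)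
    (x : Fin (n + 1) → ℝ) (hbin : ∀ i, x i = 0 ∨ x i = 1) (hx1 : x 0 = 1) :
    ∃ τ : List ℕ,
      τ.length ≤ ⌈2 * Real.sqrt (⌈Real.logb (1 + ε) (1 / ε)⌉₊ : ℝ)⌉₊ ∧
      (∀ k, k + 1 < τ.length → τ.getD k 0 + (k + 1) ≤ τ.getD (k + 1) 0) ∧
      (∀ l ∈ τ.getLast?, l ≤ ⌈Real.logb (1 + ε) (1 / ε)⌉₊ - 1) ∧
      (∀ i : Fin (n + 1), i ≠ 0 → x i = 1 →
        ((1 + ε) : ℝ) ^ (-(⌈Real.logb (1 + ε) (1 / ε)⌉₊ : ℤ)) < c i →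
        ∃ k < τ.length,
          ((1 + ε) : ℝ) ^ (-((τ.getD k 0 : ℤ) + (k + 1))) < c i ∧
          c i ≤ ((1 + ε) : ℝ) ^ (-(τ.getD k 0 : ℤ))) := by
  set C : ℕ := ⌈Real.logb (1 + ε) (1 / ε)⌉₊ with hCdef
  have ha : (1 : ℝ) < 1 + ε := by linarith
  have hci1 : ∀ i : Fin (n + 1), c i ≤ 1 := by
    intro i; rw [← hc1]; exact hcsorted 0 i (Fin.zero_le i)
  by_cases hC0 : C = 0
  · -- no item can have cost > (1+ε)^0 = 1
    refine ⟨[], by simp, by simp, by simp, ?_⟩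
    intro i _ _ hci
    rw [hC0] at hci
    simp at hci
    exact absurd (hci1 i) (not_le.2 hci)
  · have hC1 : 1 ≤ C := Nat.one_le_iff_ne_zero.2 hC0
    -- m = minimal with covT m ≥ C
    have hex : ∃ m, C ≤ covT m := by
      refine ⟨C, ?_⟩
      have := covT_two_mul C
      nlinarith [this]
    set m := Nat.find hex with hmdef
    have hmT : C ≤ covT m := Nat.find_spec hex
    have hm1 : 1 ≤ m := by
      rcases Nat.eq_zero_or_pos m with h | h
      · exfalso; rw [h] at hmT; simp [covT] at hmT; omega
      · exact h
    have hmmin : covT (m - 1) < C := by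
      have := Nat.find_min hex (show m - 1 < m by omega)
      omega
    refine ⟨(List.range m).map covT, ?_, ?_, ?_, ?_⟩
    · -- length bound
      have hlen : ((List.range m).map covT).length = m := by simp
      rw [hlen]
      have hsq : ((m - 1 : ℕ) : ℝ) < Real.sqrt (2 * C) := by
        apply (Real.lt_sqrt (by positivity)).2
        have h2 : 2 * covT (m - 1) = (m - 1) * m := by
          have := covT_two_mul (m - 1)
          have : (m - 1) + 1 = m := by omega
          rw [covT_two_mul, this]
        have hnat : (m - 1) * (m - 1) < 2 * C := by
          have : (m - 1) * (m - 1) ≤ (m - 1) * m := Nat.mul_le_mul_left _ (by omega)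
          omega
        have := (Nat.cast_lt (α := ℝ)).2 hnat
        push_cast at this ⊢
        nlinarith
      have hsqrt2 : Real.sqrt (2 * C) ≤ 2 * Real.sqrt C := by
        rw [show (2 : ℝ) * C = 2 * C from rfl, Real.sqrt_mul (by norm_num)]
        have h2 : Real.sqrt 2 ≤ 2 := by
          nlinarith [Real.sq_sqrt (show (0:ℝ) ≤ 2 by norm_num), Real.sqrt_nonneg 2]
        exact mul_le_mul_of_nonneg_right h2 (Real.sqrt_nonneg _)
      have : ((m - 1 : ℕ) : ℝ) < 2 * Real.sqrt C := lt_of_lt_of_le hsq hsqrt2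
      have := Nat.lt_ceil.2 this
      omega
    · -- gap condition
      intro k hk
      have hklen : k + 1 < m := by simpa using hk
      have h1 : ((List.range m).map covT).getD k 0 = covT k := by
        simp [List.getD_eq_getElem?_getD, List.getElem?_map, List.getElem?_range,
          show k < m by omega]
      have h2 : ((List.range m).map covT).getD (k + 1) 0 = covT (k + 1) := by
        simp [List.getD_eq_getElem?_getD, List.getElem?_map, List.getElem?_range, hklen]
      rw [h1, h2]
      simp [covT]
    · -- last element bound
      intro l hl
      have hmem : l ∈ (List.range m).map covT := List.mem_of_mem_getLast? hl
      obtain ⟨k, hk, rfl⟩ := by simpa using hmem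
      have : covT k ≤ covT (m - 1) := covT_mono (by omega)
      omega
    · -- coverage
      intro i _ _ hci
      obtain ⟨j, hjC, hj1, hj2⟩ := pow_locate (1 + ε) ha (c i) (hci1 i) C hci
      have hjT : j < covT m := lt_of_lt_of_le hjC hmT
      obtain ⟨k, hkm, hk1, hk2⟩ := covT_locate m j hjT
      refine ⟨k, by simpa using hkm, ?_, ?_⟩
      · have hg : ((List.range m).map covT).getD k 0 = covT k := by
          simp [List.getD_eq_getElem?_getD, List.getElem?_map, List.getElem?_range, hkm]
        rw [hg]
        have hexp : -((covT k : ℤ) + (k + 1)) ≤ -((j : ℤ) + 1) := by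
          have : (j : ℤ) + 1 ≤ (covT (k + 1) : ℤ) := by exact_mod_cast hk2
          have hT : (covT (k + 1) : ℤ) = (covT k : ℤ) + (k + 1) := by
            simp [covT]
          omega
        calc (1 + ε : ℝ) ^ (-((covT k : ℤ) + (k + 1)))
            ≤ (1 + ε) ^ (-((j : ℤ) + 1)) := zpow_le_zpow_right₀ ha.le hexp
          _ < c i := hj1
      · have hg : ((List.range m).map covT).getD k 0 = covT k := by
          simp [List.getD_eq_getElem?_getD, List.getElem?_map, List.getElem?_range, hkm]
        rw [hg]
        have hexp : -((j : ℤ)) ≤ -((covT k : ℤ)) := by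
          have : (covT k : ℤ) ≤ (j : ℤ) := by exact_mod_cast hk1
          omega
        calc c i ≤ (1 + ε) ^ (-(j : ℤ)) := hj2
          _ ≤ (1 + ε) ^ (-((covT k : ℤ))) := zpow_le_zpow_right₀ ha.le hexp
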